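/- If d ∈ D then (2√2/3) · d ∈ D. -/

import Mathlib

/-- `φ(p,q) = (p₁−q₁)² + (p₂−q₂)²` for `p, q ∈ ℂ²`. -/
noncomputable def phi2 (p q : Fin 2 → ℂ) : ℂ := (p 0 - q 0) ^ 2 + (p 1 - q 1) ^ 2

/-- `D` is the set of real `d > 0` such that for all `x, y ∈ ℝ²` with `|x−y| = d` there is a
finite set `S` with `{x,y} ⊆ S ⊆ ℝ²` such that every map `f : S → ℂ²` preserving unit
distance (i.e. `φ(f u, f v) = 1` whenever `u, v ∈ S` and `|u−v| = 1`) satisfies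
`φ(f x, f y) = d²`. -/
noncomputable def D : Set ℝ :=
  {d | 0 < d ∧ ∀ x y : EuclideanSpace ℝ (Fin 2), dist x y = d →
    ∃ S : Set (EuclideanSpace ℝ (Fin 2)), S.Finite ∧ x ∈ S ∧ y ∈ S ∧
      ∀ f : EuclideanSpace ℝ (Fin 2) → (Fin 2 → ℂ),
        (∀ u ∈ S, ∀ v ∈ S, dist u v = 1 → phi2 (f u) (f v) = 1) →
        phi2 (f x) (f y) = (d : ℂ) ^ 2}


namespace BQaux

abbrev E2 := EuclideanSpace ℝ (Fin 2)

/-- unit-distance preserving on a set -/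
def UP (f : E2 → (Fin 2 → ℂ)) (S : Set E2) : Prop :=
  ∀ u ∈ S, ∀ v ∈ S, dist u v = 1 → phi2 (f u) (f v) = 1

lemma UP.mono {f : E2 → (Fin 2 → ℂ)} {S S' : Set E2} (h : S' ⊆ S) (hf : UP f S) :
    UP f S' := fun u hu v hv huv => hf u (h hu) v (h hv) huv

/-- ratios preserving D -/
def Dratio : Set ℝ := {r | 0 < r ∧ ∀ c ∈ D, r * c ∈ D}

lemma one_mem_Dratio : (1:ℝ) ∈ Dratio := ⟨one_pos, fun c hc => by simpa using hc⟩

lemma mul_mem_Dratio {r s : ℝ} (hr : r ∈ Dratio) (hs : s ∈ Dratio) : r * s ∈ Dratio :=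
  ⟨mul_pos hr.1 hs.1, fun c hc => by rw [mul_assoc]; exact hr.2 _ (hs.2 c hc)⟩

/-- get a witness set for a pair at a forced distance -/
lemma forces {t : ℝ} (ht : t ∈ D) {u v : E2} (huv : dist u v = t) :
    ∃ S : Set E2, S.Finite ∧ u ∈ S ∧ v ∈ S ∧
      ∀ f : E2 → (Fin 2 → ℂ), UP f S → phi2 (f u) (f v) = (t : ℂ) ^ 2 :=
  ht.2 u v huv

lemma dist_euclid (x y : E2) : dist x y = Real.sqrt ((x 0 - y 0)^2 + (x 1 - y 1)^2) := by
  rw [EuclideanSpace.dist_eq]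
  congr 1
  rw [Fin.sum_univ_two]
  simp [Real.dist_eq, sq_abs]

/-- point builder from an orthonormal frame -/
def mk (x : E2) (u : Fin 2 → ℝ) (α β : ℝ) : E2 :=
  WithLp.toLp 2 (fun i => x i + α * u i + β * (if i = 0 then -u 1 else u 0) : Fin 2 → ℝ)

lemma mk_apply0 (x : E2) (u : Fin 2 → ℝ) (α β : ℝ) :
    (mk x u α β) 0 = x 0 + α * u 0 + β * (-u 1) := rfl
lemma mk_apply1 (x : E2) (u : Fin 2 → ℝ) (α β : ℝ) :
    (mk x u α β) 1 = x 1 + α * u 1 + β * (u 0) := rfl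

lemma dist_mk (x : E2) (u : Fin 2 → ℝ) (hu : u 0 ^ 2 + u 1 ^ 2 = 1)
    (α β α' β' : ℝ) :
    dist (mk x u α β) (mk x u α' β') = Real.sqrt ((α - α')^2 + (β - β')^2) := by
  rw [dist_euclid, mk_apply0, mk_apply1, mk_apply0, mk_apply1]
  congr 1
  nlinarith [hu]

lemma sqrt_of_sq {a b : ℝ} (hb : 0 ≤ b) (h : a = b ^ 2) : Real.sqrt a = b := by
  rw [h, Real.sqrt_sq hb]


/-- Core kite algebra over ℂ (coordinates): apexes p,y with equal squared distances
to the base pair (0, a). -/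
lemma core_poly (a0 a1 p0 p1 y0 y1 qq rr ss : ℂ) (hqq : qq ≠ 0)
    (hq : a0^2 + a1^2 = qq)
    (h1 : p0^2 + p1^2 = rr) (h2 : (p0-a0)^2 + (p1-a1)^2 = ss)
    (h3 : y0^2 + y1^2 = rr) (h4 : (y0-a0)^2 + (y1-a1)^2 = ss) :
    (p0 = y0 ∧ p1 = y1) ∨
      qq * ((p0-y0)^2 + (p1-y1)^2) = 4*rr*qq - (qq+rr-ss)^2 := by
  have hp_a : 2*(p0*a0 + p1*a1) = rr + qq - ss := by linear_combination h1 + hq - h2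
  have hy_a : 2*(y0*a0 + y1*a1) = rr + qq - ss := by linear_combination h3 + hq - h4
  have hdot : (p0-y0)*a0 + (p1-y1)*a1 = 0 := by
    linear_combination (1/2 : ℂ)*hp_a - (1/2 : ℂ)*hy_a
  have hk1 : (p0*a0+p1*a1)^2 + (p0*a1-p1*a0)^2 = rr*qq := by
    linear_combination (a0^2+a1^2)*h1 + rr*hq
  have hk2 : (y0*a0+y1*a1)^2 + (y0*a1-y1*a0)^2 = rr*qq := by
    linear_combination (a0^2+a1^2)*h3 + rr*hq
  have hQe : ((p0-y0)^2 + (p1-y1)^2) * qq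
      = ((p0*a1-p1*a0) - (y0*a1-y1*a0))^2 := by
    linear_combination (-((p0-y0)^2+(p1-y1)^2))*hq + ((p0-y0)*a0+(p1-y1)*a1)*hdot
  have hfac : ((p0*a1-p1*a0) - (y0*a1-y1*a0)) * ((p0*a1-p1*a0) + (y0*a1-y1*a0)) = 0 := by
    linear_combination hk1 - hk2 + (p0*a0+p1*a1 + (y0*a0+y1*a1)) * ((1/2:ℂ)*hy_a - (1/2:ℂ)*hp_a)
  rcases mul_eq_zero.mp hfac with hdiff | hsum
  · left
    have h00 : (p0-y0) * qq = 0 := by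
      linear_combination (-(p0-y0))*hq + a0*hdot + a1*hdiff
    have h11 : (p1-y1) * qq = 0 := by
      linear_combination (-(p1-y1))*hq + a1*hdot - a0*hdiff
    exact ⟨sub_eq_zero.mp ((mul_eq_zero.mp h00).resolve_right hqq),
           sub_eq_zero.mp ((mul_eq_zero.mp h11).resolve_right hqq)⟩
  · right
    linear_combination hQe
      + ((y0*a1-y1*a0) - 3*(p0*a1-p1*a0))*hsum + 4*hk1
      - (qq+rr-ss + 2*(p0*a0+p1*a1)) * hp_a


/-- unique solvability of the 2×2 linear system given nonzero determinant -/
lemma tripod {a0 a1 b0 b1 z0 z1 α β : ℂ}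
    (hdet : a0 * b1 - a1 * b0 ≠ 0)
    (h1 : z0*a0 + z1*a1 = α*(a0^2+a1^2) + β*(a0*b0+a1*b1))
    (h2 : z0*b0 + z1*b1 = α*(a0*b0+a1*b1) + β*(b0^2+b1^2)) :
    z0 = α*a0 + β*b0 ∧ z1 = α*a1 + β*b1 := by
  have e1 : (z0 - (α*a0+β*b0))*a0 + (z1 - (α*a1+β*b1))*a1 = 0 := by linear_combination h1
  have e2 : (z0 - (α*a0+β*b0))*b0 + (z1 - (α*a1+β*b1))*b1 = 0 := by linear_combination h2
  have k0 : (z0 - (α*a0+β*b0)) * (a0*b1 - a1*b0) = 0 := by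
    linear_combination b1*e1 - a1*e2
  have k1 : (z1 - (α*a1+β*b1)) * (a0*b1 - a1*b0) = 0 := by
    linear_combination a0*e2 - b0*e1
  exact ⟨sub_eq_zero.mp ((mul_eq_zero.mp k0).resolve_right hdet),
         sub_eq_zero.mp ((mul_eq_zero.mp k1).resolve_right hdet)⟩


set_option maxHeartbeats 1000000 in
/-- main kite/spindle lemma -/
lemma kite {q r s m e : ℝ}
    (hq : q ∈ Dratio) (hr : r ∈ Dratio) (hs : s ∈ Dratio) (hm : m ∈ Dratio)
    (he : 0 < e)
    (hee : e^2 * q^2 = 4*r^2*q^2 - (q^2+r^2-s^2)^2)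
    (hme : m^2 ≤ 4*e^2) (hne : m^2 ≠ e^2) : e ∈ Dratio := by
  refine ⟨he, fun c hc => ⟨mul_pos he hc.1, fun x y hxy => ?_⟩⟩
  have hc0 : 0 < c := hc.1
  have hq0 : (0:ℝ) < q := hq.1
  have hL : 0 < e * c := mul_pos he hc0
  have hxy2 : (x 0 - y 0)^2 + (x 1 - y 1)^2 = (e*c)^2 := by
    have h := hxy
    rw [dist_euclid] at h
    have h2 := congrArg (fun z => z^2) h
    simpa [Real.sq_sqrt (by positivity : (0:ℝ) ≤ (x 0 - y 0)^2 + (x 1 - y 1)^2)] using h2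
  set u : Fin 2 → ℝ := fun i => (y i - x i) / (e*c) with hudef
  have hu : u 0 ^ 2 + u 1 ^ 2 = 1 := by
    show ((y 0 - x 0)/(e*c)) ^ 2 + ((y 1 - x 1)/(e*c)) ^ 2 = 1
    rw [div_pow, div_pow, ← add_div]
    rw [show (y 0 - x 0)^2 + (y 1 - x 1)^2 = (e*c)^2 by linear_combination hxy2]
    exact div_self (by positivity)
  -- parameters
  set t : ℝ := (q^2 + r^2 - s^2) / (2*q) with htdef
  have ht : t * (2*q) = q^2 + r^2 - s^2 := by
    rw [htdef]; field_simp
  have hkey4 : (e^2 + 4*t^2 - 4*r^2) * q^2 = 0 := by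
    linear_combination hee + (t*(2*q) + (q^2+r^2-s^2)) * ht
  have key : e^2/4 + t^2 = r^2 := by
    have h := (mul_eq_zero.mp hkey4).resolve_right (pow_ne_zero 2 hq0.ne')
    linarith
  have key2 : e^2/4 + (t - q)^2 = s^2 := by linear_combination key - ht
  set C0 : ℝ := 1 - m^2/(2*e^2) with hC0def
  have hC0m : C0 * (2*e^2) = 2*e^2 - m^2 := by
    rw [hC0def]; field_simp
  have hC1 : 1 - C0^2 ≥ 0 := by
    have h1 : 1 - C0 ≥ 0 := by
      rw [hC0def]; simp only [sub_sub_cancel]; positivity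
    have h2 : 1 + C0 ≥ 0 := by
      have hp : (0:ℝ) < 2*e^2 := by positivity
      nlinarith [hC0m, hme, hp]
    nlinarith
  set S0 : ℝ := Real.sqrt (1 - C0^2) with hS0def
  have hS : S0^2 = 1 - C0^2 := Real.sq_sqrt hC1
  -- points
  set A : E2 := mk x u (e*c/2) (t*c) with hA
  set B : E2 := mk x u (e*c/2) ((t-q)*c) with hB
  set X' : E2 := mk x u (e*c - C0*(e*c)) (-(S0*(e*c))) with hX'
  set A' : E2 := mk x u (e*c - C0*(e*c/2) - S0*(t*c)) (-(S0*(e*c/2)) + C0*(t*c)) with hA'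
  set B' : E2 := mk x u (e*c - C0*(e*c/2) - S0*((t-q)*c)) (-(S0*(e*c/2)) + C0*((t-q)*c)) with hB'
  have hxmk : x = mk x u 0 0 := by
    refine PiLp.ext (fun i => ?_)
    show x i = x i + 0 * u i + 0 * _
    ring
  have hymk : y = mk x u (e*c) 0 := by
    refine PiLp.ext (fun i => ?_)
    have : u i = (y i - x i)/(e*c) := rfl
    show y i = x i + (e*c) * u i + 0 * _
    rw [this]; field_simp
    ring
  have hqc : (0:ℝ) ≤ q*c := (mul_pos hq0 hc0).le
  have hrc : (0:ℝ) ≤ r*c := (mul_pos hr.1 hc0).le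
  have hsc : (0:ℝ) ≤ s*c := (mul_pos hs.1 hc0).le
  have hmc : (0:ℝ) ≤ m*c := (mul_pos hm.1 hc0).le
  -- distances
  have dAB : dist A B = q*c := by
    rw [hA, hB, dist_mk x u hu]
    exact sqrt_of_sq hqc (by ring)
  have dxA : dist x A = r*c := by
    rw [hxmk, hA, dist_mk x u hu]
    exact sqrt_of_sq hrc (by linear_combination c^2 * key)
  have dxB : dist x B = s*c := by
    rw [hxmk, hB, dist_mk x u hu]
    exact sqrt_of_sq hsc (by linear_combination c^2 * key2)
  have dyA : dist y A = r*c := by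
    rw [hymk, hA, dist_mk x u hu]
    exact sqrt_of_sq hrc (by linear_combination c^2 * key)
  have dyB : dist y B = s*c := by
    rw [hymk, hB, dist_mk x u hu]
    exact sqrt_of_sq hsc (by linear_combination c^2 * key2)
  have dA'B' : dist A' B' = q*c := by
    rw [hA', hB', dist_mk x u hu]
    exact sqrt_of_sq hqc (by linear_combination (q*c)^2 * hS)
  have dX'A' : dist X' A' = r*c := by
    rw [hX', hA', dist_mk x u hu]
    exact sqrt_of_sq hrc
      (by linear_combination ((e*c)^2/4 + t^2*c^2) * hS + c^2*key)
  have dX'B' : dist X' B' = s*c := by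
    rw [hX', hB', dist_mk x u hu]
    exact sqrt_of_sq hsc
      (by linear_combination ((e*c)^2/4 + (t-q)^2*c^2) * hS + c^2*key2)
  have dyA' : dist y A' = r*c := by
    rw [hymk, hA', dist_mk x u hu]
    exact sqrt_of_sq hrc
      (by linear_combination ((e*c)^2/4 + t^2*c^2) * hS + c^2*key)
  have dyB' : dist y B' = s*c := by
    rw [hymk, hB', dist_mk x u hu]
    exact sqrt_of_sq hsc
      (by linear_combination ((e*c)^2/4 + (t-q)^2*c^2) * hS + c^2*key2)
  have dxX' : dist x X' = m*c := by
    rw [hxmk, hX', dist_mk x u hu]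
    refine sqrt_of_sq hmc ?_
    linear_combination (e*c)^2 * hS - c^2 * hC0m
  -- witness sets
  obtain ⟨S1, fS1, m1A, m1B, w1⟩ := forces (hq.2 c hc) dAB
  obtain ⟨S2, fS2, m2x, m2A, w2⟩ := forces (hr.2 c hc) dxA
  obtain ⟨S3, fS3, m3x, m3B, w3⟩ := forces (hs.2 c hc) dxB
  obtain ⟨S4, fS4, m4y, m4A, w4⟩ := forces (hr.2 c hc) dyA
  obtain ⟨S5, fS5, m5y, m5B, w5⟩ := forces (hs.2 c hc) dyB
  obtain ⟨S6, fS6, m6A, m6B, w6⟩ := forces (hq.2 c hc) dA'B'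
  obtain ⟨S7, fS7, m7X, m7A, w7⟩ := forces (hr.2 c hc) dX'A'
  obtain ⟨S8, fS8, m8X, m8B, w8⟩ := forces (hs.2 c hc) dX'B'
  obtain ⟨S9, fS9, m9y, m9A, w9⟩ := forces (hr.2 c hc) dyA'
  obtain ⟨S10, fS10, m10y, m10B, w10⟩ := forces (hs.2 c hc) dyB'
  obtain ⟨S11, fS11, m11x, m11X, w11⟩ := forces (hm.2 c hc) dxX'
  set SS : Set E2 := S1 ∪ S2 ∪ S3 ∪ S4 ∪ S5 ∪ S6 ∪ S7 ∪ S8 ∪ S9 ∪ S10 ∪ S11 with hSS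
  have sub1 : S1 ⊆ SS := by rw [hSS]; intro z hz; simp only [Set.mem_union]; tauto
  have sub2 : S2 ⊆ SS := by rw [hSS]; intro z hz; simp only [Set.mem_union]; tauto
  have sub3 : S3 ⊆ SS := by rw [hSS]; intro z hz; simp only [Set.mem_union]; tauto
  have sub4 : S4 ⊆ SS := by rw [hSS]; intro z hz; simp only [Set.mem_union]; tauto
  have sub5 : S5 ⊆ SS := by rw [hSS]; intro z hz; simp only [Set.mem_union]; tauto
  have sub6 : S6 ⊆ SS := by rw [hSS]; intro z hz; simp only [Set.mem_union]; tauto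
  have sub7 : S7 ⊆ SS := by rw [hSS]; intro z hz; simp only [Set.mem_union]; tauto
  have sub8 : S8 ⊆ SS := by rw [hSS]; intro z hz; simp only [Set.mem_union]; tauto
  have sub9 : S9 ⊆ SS := by rw [hSS]; intro z hz; simp only [Set.mem_union]; tauto
  have sub10 : S10 ⊆ SS := by rw [hSS]; intro z hz; simp only [Set.mem_union]; tauto
  have sub11 : S11 ⊆ SS := by rw [hSS]; intro z hz; simp only [Set.mem_union]; tauto
  refine ⟨SS, ?_, sub2 m2x, sub4 m4y, ?_⟩
  · rw [hSS]
    exact ((((((((((fS1.union fS2).union fS3).union fS4).union fS5).union fS6).union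
      fS7).union fS8).union fS9).union fS10).union fS11)
  intro f hf
  have hfUP : UP f SS := hf
  have e1 := w1 f (UP.mono sub1 hfUP)
  have e2 := w2 f (UP.mono sub2 hfUP)
  have e3 := w3 f (UP.mono sub3 hfUP)
  have e4 := w4 f (UP.mono sub4 hfUP)
  have e5 := w5 f (UP.mono sub5 hfUP)
  have e6 := w6 f (UP.mono sub6 hfUP)
  have e7 := w7 f (UP.mono sub7 hfUP)
  have e8 := w8 f (UP.mono sub8 hfUP)
  have e9 := w9 f (UP.mono sub9 hfUP)
  have e10 := w10 f (UP.mono sub10 hfUP)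
  have e11 := w11 f (UP.mono sub11 hfUP)
  simp only [phi2] at e1 e2 e3 e4 e5 e6 e7 e8 e9 e10 e11 ⊢
  have hqcC : (((q*c : ℝ)) : ℂ)^2 ≠ 0 :=
    pow_ne_zero 2 (by exact_mod_cast (mul_pos hq0 hc0).ne')
  have heeC : ((e:ℂ))^2 * ((q:ℂ))^2
      = 4*((r:ℂ))^2*((q:ℂ))^2 - (((q:ℂ))^2+((r:ℂ))^2-((s:ℂ))^2)^2 := by
    exact_mod_cast hee
  have target : (((q*c:ℝ)):ℂ)^2 * (((e*c:ℝ)):ℂ)^2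
      = 4*(((r*c:ℝ)):ℂ)^2*(((q*c:ℝ)):ℂ)^2
        - ((((q*c:ℝ)):ℂ)^2+(((r*c:ℝ)):ℂ)^2-(((s*c:ℝ)):ℂ)^2)^2 := by
    push_cast
    linear_combination ((c:ℂ))^4 * heeC
  rcases core_poly (f B 0 - f A 0) (f B 1 - f A 1) (f x 0 - f A 0) (f x 1 - f A 1)
      (f y 0 - f A 0) (f y 1 - f A 1) ((((q*c:ℝ)):ℂ)^2) ((((r*c:ℝ)):ℂ)^2) ((((s*c:ℝ)):ℂ)^2) hqcC
      (by linear_combination e1) (by linear_combination e2) (by linear_combination e3)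
      (by linear_combination e4) (by linear_combination e5) with hfl | hok
  · exfalso
    obtain ⟨hx0, hx1⟩ := hfl
    rcases core_poly (f B' 0 - f A' 0) (f B' 1 - f A' 1) (f X' 0 - f A' 0) (f X' 1 - f A' 1)
        (f y 0 - f A' 0) (f y 1 - f A' 1) ((((q*c:ℝ)):ℂ)^2) ((((r*c:ℝ)):ℂ)^2) ((((s*c:ℝ)):ℂ)^2) hqcC
        (by linear_combination e6) (by linear_combination e7) (by linear_combination e8)
        (by linear_combination e9) (by linear_combination e10) with hfl2 | hok2
    · obtain ⟨hz0, hz1⟩ := hfl2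
      have hmm : (((m*c:ℝ)):ℂ)^2 = 0 := by
        linear_combination -e11 + (f x 0 - f X' 0)*hx0 - (f x 0 - f X' 0)*hz0
          + (f x 1 - f X' 1)*hx1 - (f x 1 - f X' 1)*hz1
      have hmr : (m*c)^2 = (0:ℝ) := by exact_mod_cast hmm
      exact (mul_pos hm.1 hc0).ne' (pow_eq_zero_iff two_ne_zero |>.mp hmr)
    · have hsum : ((f X' 0 - f y 0)^2 + (f X' 1 - f y 1)^2 : ℂ) = (((m*c:ℝ)):ℂ)^2 := by
        linear_combination e11 + (2*(f X' 0) - f y 0 - f x 0)*hx0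
          + (2*(f X' 1) - f y 1 - f x 1)*hx1
      have hS' := mul_left_cancel₀ hqcC (hok2.trans target.symm)
      have hmt : (((m*c:ℝ)):ℂ)^2 = (((e*c:ℝ)):ℂ)^2 := by
        linear_combination hS' - hsum
      have hreal : (m*c)^2 = (e*c)^2 := by exact_mod_cast hmt
      have hzero : (m^2 - e^2)*c^2 = 0 := by linear_combination hreal
      have := (mul_eq_zero.mp hzero).resolve_right (pow_ne_zero 2 hc0.ne')
      exact hne (by linarith)
  · have hS' := mul_left_cancel₀ hqcC (hok.trans target.symm)
    linear_combination hS'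


set_option maxHeartbeats 2000000 in
/-- the rigid frame: forces ratio 2/3 -/
lemma frame (h1d : (1:ℝ) ∈ Dratio) (hs3d : Real.sqrt 3 ∈ Dratio)
    (hs33d : Real.sqrt 3 / 3 ∈ Dratio) (h13d : (1/3 : ℝ) ∈ Dratio) :
    (2/3 : ℝ) ∈ Dratio := by
  refine ⟨(by norm_num : (0:ℝ) < 2/3), fun c hc => ⟨mul_pos (by norm_num : (0:ℝ) < 2/3) hc.1, fun x y hxy => ?_⟩⟩
  have hc0 : 0 < c := hc.1
  set s3 : ℝ := Real.sqrt 3 with hs3def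
  have hs3 : s3^2 = 3 := Real.sq_sqrt (by norm_num)
  have hs3nn : (0:ℝ) ≤ s3 := Real.sqrt_nonneg 3
  have hL : 0 < 2/3*c := by linarith
  have hxy2 : (x 0 - y 0)^2 + (x 1 - y 1)^2 = (2/3*c)^2 := by
    have h := hxy
    rw [dist_euclid] at h
    have h2 := congrArg (fun z => z^2) h
    simpa [Real.sq_sqrt (by positivity : (0:ℝ) ≤ (x 0 - y 0)^2 + (x 1 - y 1)^2)] using h2
  set u : Fin 2 → ℝ := fun i => (y i - x i) / (2/3*c) with hudef
  have hu : u 0 ^ 2 + u 1 ^ 2 = 1 := by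
    show ((y 0 - x 0)/(2/3*c)) ^ 2 + ((y 1 - x 1)/(2/3*c)) ^ 2 = 1
    rw [div_pow, div_pow, ← add_div]
    rw [show (y 0 - x 0)^2 + (y 1 - x 1)^2 = (2/3*c)^2 by linear_combination hxy2]
    exact div_self (by positivity)
  set PA : E2 := mk x u (c/2) (-(s3/6*c)) with hPA
  set PB : E2 := mk x u c (s3/3*c) with hPB
  set PC : E2 := mk x u 0 (s3/3*c) with hPC
  set PCm : E2 := mk x u (3/2*c) (-(s3/6*c)) with hPCm
  set PG : E2 := mk x u (c/2) (s3/6*c) with hPG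
  set PGm : E2 := mk x u c 0 with hPGm
  have hxmk : x = mk x u 0 0 := by
    refine PiLp.ext (fun i => ?_)
    show x i = x i + 0 * u i + 0 * _
    ring
  have hymk : y = mk x u (2/3*c) 0 := by
    refine PiLp.ext (fun i => ?_)
    have : u i = (y i - x i)/(2/3*c) := rfl
    show y i = x i + (2/3*c) * u i + 0 * _
    rw [this]
    field_simp [hL.ne']
    ring
  have d1 : dist PA PB = 1*c := by
    rw [hPA, hPB, dist_mk x u hu]
    exact sqrt_of_sq (mul_nonneg zero_le_one hc0.le) (by linear_combination (c^2/4)*hs3)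
  have d2 : dist PA PC = 1*c := by
    rw [hPA, hPC, dist_mk x u hu]
    exact sqrt_of_sq (mul_nonneg zero_le_one hc0.le) (by linear_combination (c^2/4)*hs3)
  have d3 : dist PB PC = 1*c := by
    rw [hPB, hPC, dist_mk x u hu]
    exact sqrt_of_sq (mul_nonneg zero_le_one hc0.le) (by linear_combination 0*hs3)
  have d4 : dist PCm PA = 1*c := by
    rw [hPCm, hPA, dist_mk x u hu]
    exact sqrt_of_sq (mul_nonneg zero_le_one hc0.le) (by linear_combination 0*hs3)
  have d5 : dist PCm PB = 1*c := by
    rw [hPCm, hPB, dist_mk x u hu]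
    exact sqrt_of_sq (mul_nonneg zero_le_one hc0.le) (by linear_combination (c^2/4)*hs3)
  have d6 : dist PCm PC = s3*c := by
    rw [hPCm, hPC, dist_mk x u hu]
    exact sqrt_of_sq (mul_nonneg hs3nn hc0.le) (by linear_combination (-(3/4)*c^2)*hs3)
  have d7 : dist PG PA = s3/3*c := by
    rw [hPG, hPA, dist_mk x u hu]
    exact sqrt_of_sq (mul_nonneg (by linarith [hs3nn] : (0:ℝ) ≤ s3/3) hc0.le) (by linear_combination 0*hs3)
  have d8 : dist PG PB = s3/3*c := by
    rw [hPG, hPB, dist_mk x u hu]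
    exact sqrt_of_sq (mul_nonneg (by linarith [hs3nn] : (0:ℝ) ≤ s3/3) hc0.le) (by linear_combination (-(c^2/12))*hs3)
  have d9 : dist PG PC = s3/3*c := by
    rw [hPG, hPC, dist_mk x u hu]
    exact sqrt_of_sq (mul_nonneg (by linarith [hs3nn] : (0:ℝ) ≤ s3/3) hc0.le) (by linear_combination (-(c^2/12))*hs3)
  have d10 : dist x PC = s3/3*c := by
    rw [hxmk, hPC, dist_mk x u hu]
    exact sqrt_of_sq (mul_nonneg (by linarith [hs3nn] : (0:ℝ) ≤ s3/3) hc0.le) (by linear_combination 0*hs3)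
  have d11 : dist x PA = s3/3*c := by
    rw [hxmk, hPA, dist_mk x u hu]
    exact sqrt_of_sq (mul_nonneg (by linarith [hs3nn] : (0:ℝ) ≤ s3/3) hc0.le) (by linear_combination (-(c^2/12))*hs3)
  have d12 : dist x PG = s3/3*c := by
    rw [hxmk, hPG, dist_mk x u hu]
    exact sqrt_of_sq (mul_nonneg (by linarith [hs3nn] : (0:ℝ) ≤ s3/3) hc0.le) (by linear_combination (-(c^2/12))*hs3)
  have d13 : dist PGm PCm = s3/3*c := by
    rw [hPGm, hPCm, dist_mk x u hu]
    exact sqrt_of_sq (mul_nonneg (by linarith [hs3nn] : (0:ℝ) ≤ s3/3) hc0.le) (by linear_combination (-(c^2/12))*hs3)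
  have d14 : dist PGm PA = s3/3*c := by
    rw [hPGm, hPA, dist_mk x u hu]
    exact sqrt_of_sq (mul_nonneg (by linarith [hs3nn] : (0:ℝ) ≤ s3/3) hc0.le) (by linear_combination (-(c^2/12))*hs3)
  have d15 : dist PGm x = 1*c := by
    rw [hxmk, hPGm, dist_mk x u hu]
    exact sqrt_of_sq (mul_nonneg zero_le_one hc0.le) (by linear_combination 0*hs3)
  have d16 : dist y PGm = 1/3*c := by
    rw [hymk, hPGm, dist_mk x u hu]
    exact sqrt_of_sq (mul_nonneg (by norm_num) hc0.le) (by linear_combination 0*hs3)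
  have d17 : dist y PG = 1/3*c := by
    rw [hymk, hPG, dist_mk x u hu]
    exact sqrt_of_sq (mul_nonneg (by norm_num) hc0.le) (by linear_combination (c^2/36)*hs3)
  have d18 : dist y PA = 1/3*c := by
    rw [hymk, hPA, dist_mk x u hu]
    exact sqrt_of_sq (mul_nonneg (by norm_num) hc0.le) (by linear_combination (c^2/36)*hs3)
  obtain ⟨T1, fT1, mA1, mB1, w1⟩ := forces (h1d.2 c hc) d1
  obtain ⟨T2, fT2, mA2, mB2, w2⟩ := forces (h1d.2 c hc) d2
  obtain ⟨T3, fT3, mA3, mB3, w3⟩ := forces (h1d.2 c hc) d3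
  obtain ⟨T4, fT4, mA4, mB4, w4⟩ := forces (h1d.2 c hc) d4
  obtain ⟨T5, fT5, mA5, mB5, w5⟩ := forces (h1d.2 c hc) d5
  obtain ⟨T6, fT6, mA6, mB6, w6⟩ := forces (hs3d.2 c hc) d6
  obtain ⟨T7, fT7, mA7, mB7, w7⟩ := forces (hs33d.2 c hc) d7
  obtain ⟨T8, fT8, mA8, mB8, w8⟩ := forces (hs33d.2 c hc) d8
  obtain ⟨T9, fT9, mA9, mB9, w9⟩ := forces (hs33d.2 c hc) d9
  obtain ⟨T10, fT10, mA10, mB10, w10⟩ := forces (hs33d.2 c hc) d10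
  obtain ⟨T11, fT11, mA11, mB11, w11⟩ := forces (hs33d.2 c hc) d11
  obtain ⟨T12, fT12, mA12, mB12, w12⟩ := forces (hs33d.2 c hc) d12
  obtain ⟨T13, fT13, mA13, mB13, w13⟩ := forces (hs33d.2 c hc) d13
  obtain ⟨T14, fT14, mA14, mB14, w14⟩ := forces (hs33d.2 c hc) d14
  obtain ⟨T15, fT15, mA15, mB15, w15⟩ := forces (h1d.2 c hc) d15
  obtain ⟨T16, fT16, mA16, mB16, w16⟩ := forces (h13d.2 c hc) d16
  obtain ⟨T17, fT17, mA17, mB17, w17⟩ := forces (h13d.2 c hc) d17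
  obtain ⟨T18, fT18, mA18, mB18, w18⟩ := forces (h13d.2 c hc) d18
  set SS : Set E2 := T1 ∪ T2 ∪ T3 ∪ T4 ∪ T5 ∪ T6 ∪ T7 ∪ T8 ∪ T9 ∪ T10 ∪ T11 ∪ T12 ∪ T13 ∪ T14 ∪ T15 ∪ T16 ∪ T17 ∪ T18 with hSS
  have sub1 : T1 ⊆ SS := by rw [hSS]; intro z hz; simp only [Set.mem_union]; tauto
  have sub2 : T2 ⊆ SS := by rw [hSS]; intro z hz; simp only [Set.mem_union]; tauto
  have sub3 : T3 ⊆ SS := by rw [hSS]; intro z hz; simp only [Set.mem_union]; tauto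
  have sub4 : T4 ⊆ SS := by rw [hSS]; intro z hz; simp only [Set.mem_union]; tauto
  have sub5 : T5 ⊆ SS := by rw [hSS]; intro z hz; simp only [Set.mem_union]; tauto
  have sub6 : T6 ⊆ SS := by rw [hSS]; intro z hz; simp only [Set.mem_union]; tauto
  have sub7 : T7 ⊆ SS := by rw [hSS]; intro z hz; simp only [Set.mem_union]; tauto
  have sub8 : T8 ⊆ SS := by rw [hSS]; intro z hz; simp only [Set.mem_union]; tauto
  have sub9 : T9 ⊆ SS := by rw [hSS]; intro z hz; simp only [Set.mem_union]; tauto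
  have sub10 : T10 ⊆ SS := by rw [hSS]; intro z hz; simp only [Set.mem_union]; tauto
  have sub11 : T11 ⊆ SS := by rw [hSS]; intro z hz; simp only [Set.mem_union]; tauto
  have sub12 : T12 ⊆ SS := by rw [hSS]; intro z hz; simp only [Set.mem_union]; tauto
  have sub13 : T13 ⊆ SS := by rw [hSS]; intro z hz; simp only [Set.mem_union]; tauto
  have sub14 : T14 ⊆ SS := by rw [hSS]; intro z hz; simp only [Set.mem_union]; tauto
  have sub15 : T15 ⊆ SS := by rw [hSS]; intro z hz; simp only [Set.mem_union]; tauto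
  have sub16 : T16 ⊆ SS := by rw [hSS]; intro z hz; simp only [Set.mem_union]; tauto
  have sub17 : T17 ⊆ SS := by rw [hSS]; intro z hz; simp only [Set.mem_union]; tauto
  have sub18 : T18 ⊆ SS := by rw [hSS]; intro z hz; simp only [Set.mem_union]; tauto
  refine ⟨SS, by rw [hSS]; exact (((((((((((((((((fT1.union fT2).union fT3).union fT4).union fT5).union fT6).union fT7).union fT8).union fT9).union fT10).union fT11).union fT12).union fT13).union fT14).union fT15).union fT16).union fT17).union fT18), sub10 mA10, sub16 mA16, ?_⟩
  intro f hf
  have hfUP : UP f SS := hf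
  have e1 := w1 f (UP.mono sub1 hfUP)
  have e2 := w2 f (UP.mono sub2 hfUP)
  have e3 := w3 f (UP.mono sub3 hfUP)
  have e4 := w4 f (UP.mono sub4 hfUP)
  have e5 := w5 f (UP.mono sub5 hfUP)
  have e6 := w6 f (UP.mono sub6 hfUP)
  have e7 := w7 f (UP.mono sub7 hfUP)
  have e8 := w8 f (UP.mono sub8 hfUP)
  have e9 := w9 f (UP.mono sub9 hfUP)
  have e10 := w10 f (UP.mono sub10 hfUP)
  have e11 := w11 f (UP.mono sub11 hfUP)
  have e12 := w12 f (UP.mono sub12 hfUP)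
  have e13 := w13 f (UP.mono sub13 hfUP)
  have e14 := w14 f (UP.mono sub14 hfUP)
  have e15 := w15 f (UP.mono sub15 hfUP)
  have e16 := w16 f (UP.mono sub16 hfUP)
  have e17 := w17 f (UP.mono sub17 hfUP)
  have e18 := w18 f (UP.mono sub18 hfUP)
  simp only [phi2] at e1 e2 e3 e4 e5 e6 e7 e8 e9 e10 e11 e12 e13 e14 e15 e16 e17 e18 ⊢
  push_cast at e1 e2 e3 e4 e5 e6 e7 e8 e9 e10 e11 e12 e13 e14 e15 e16 e17 e18 ⊢
  have hs3C : ((s3:ℝ):ℂ)^2 = 3 := by exact_mod_cast hs3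
  have hccne : ((c:ℂ))^2 ≠ 0 := pow_ne_zero 2 (by exact_mod_cast hc0.ne')
  -- normalized facts
  have EQa : (f PA 0 - f PB 0)^2 + (f PA 1 - f PB 1)^2 = (c:ℂ)^2 := by linear_combination e1
  have EQb : (f PA 0 - f PC 0)^2 + (f PA 1 - f PC 1)^2 = (c:ℂ)^2 := by linear_combination e2
  have E3 : (f PB 0 - f PC 0)^2 + (f PB 1 - f PC 1)^2 = (c:ℂ)^2 := by linear_combination e3
  have Eab : 2*((f PB 0 - f PA 0)*(f PC 0 - f PA 0) + (f PB 1 - f PA 1)*(f PC 1 - f PA 1))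
      = (c:ℂ)^2 := by linear_combination EQa + EQb - E3
  have E4 : (f PCm 0 - f PA 0)^2 + (f PCm 1 - f PA 1)^2 = (c:ℂ)^2 := by linear_combination e4
  have E5 : (f PCm 0 - f PB 0)^2 + (f PCm 1 - f PB 1)^2 = (c:ℂ)^2 := by linear_combination e5
  have E6 : (f PCm 0 - f PC 0)^2 + (f PCm 1 - f PC 1)^2 = 3*(c:ℂ)^2 := by
    linear_combination e6 + ((c:ℂ))^2*hs3C
  have E7 : (f PG 0 - f PA 0)^2 + (f PG 1 - f PA 1)^2 = (c:ℂ)^2/3 := by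
    linear_combination e7 + ((c:ℂ)^2/9)*hs3C
  have E8 : (f PG 0 - f PB 0)^2 + (f PG 1 - f PB 1)^2 = (c:ℂ)^2/3 := by
    linear_combination e8 + ((c:ℂ)^2/9)*hs3C
  have E9 : (f PG 0 - f PC 0)^2 + (f PG 1 - f PC 1)^2 = (c:ℂ)^2/3 := by
    linear_combination e9 + ((c:ℂ)^2/9)*hs3C
  have E10 : (f x 0 - f PC 0)^2 + (f x 1 - f PC 1)^2 = (c:ℂ)^2/3 := by
    linear_combination e10 + ((c:ℂ)^2/9)*hs3C
  have E11 : (f x 0 - f PA 0)^2 + (f x 1 - f PA 1)^2 = (c:ℂ)^2/3 := by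
    linear_combination e11 + ((c:ℂ)^2/9)*hs3C
  have E12 : (f x 0 - f PG 0)^2 + (f x 1 - f PG 1)^2 = (c:ℂ)^2/3 := by
    linear_combination e12 + ((c:ℂ)^2/9)*hs3C
  have E13 : (f PGm 0 - f PCm 0)^2 + (f PGm 1 - f PCm 1)^2 = (c:ℂ)^2/3 := by
    linear_combination e13 + ((c:ℂ)^2/9)*hs3C
  have E14 : (f PGm 0 - f PA 0)^2 + (f PGm 1 - f PA 1)^2 = (c:ℂ)^2/3 := by
    linear_combination e14 + ((c:ℂ)^2/9)*hs3C
  have E15 : (f PGm 0 - f x 0)^2 + (f PGm 1 - f x 1)^2 = (c:ℂ)^2 := by linear_combination e15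
  have E16 : (f y 0 - f PGm 0)^2 + (f y 1 - f PGm 1)^2 = (c:ℂ)^2/9 := by linear_combination e16
  have E17 : (f y 0 - f PG 0)^2 + (f y 1 - f PG 1)^2 = (c:ℂ)^2/9 := by linear_combination e17
  have E18 : (f y 0 - f PA 0)^2 + (f y 1 - f PA 1)^2 = (c:ℂ)^2/9 := by linear_combination e18
  -- determinant
  have hdet2 : ((f PB 0 - f PA 0)*(f PC 1 - f PA 1) - (f PB 1 - f PA 1)*(f PC 0 - f PA 0))^2
      = 3/4*((c:ℂ)^2)^2 := by
    linear_combination ((f PC 0 - f PA 0)^2 + (f PC 1 - f PA 1)^2)*EQa + (c:ℂ)^2*EQb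
      - (((f PB 0 - f PA 0)*(f PC 0 - f PA 0) + (f PB 1 - f PA 1)*(f PC 1 - f PA 1)
          + (c:ℂ)^2/2)/2)*Eab
  have hdet : (f PB 0 - f PA 0)*(f PC 1 - f PA 1) - (f PB 1 - f PA 1)*(f PC 0 - f PA 0) ≠ 0 := by
    intro h
    have h0 : (3/4 : ℂ)*((c:ℂ)^2)^2 = 0 := by rw [← hdet2, h]; ring
    rcases mul_eq_zero.mp h0 with h' | h'
    · norm_num at h'
    · exact pow_ne_zero 2 hccne h'
  -- step Cm
  have hCma : (f PCm 0 - f PA 0)*(f PB 0 - f PA 0) + (f PCm 1 - f PA 1)*(f PB 1 - f PA 1)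
      = (1:ℂ)*((f PB 0 - f PA 0)^2+(f PB 1 - f PA 1)^2)
        + (-1:ℂ)*((f PB 0 - f PA 0)*(f PC 0 - f PA 0)+(f PB 1 - f PA 1)*(f PC 1 - f PA 1)) := by
    linear_combination (1/2:ℂ)*E4 - (1/2:ℂ)*E5 - (1/2:ℂ)*EQa + (1/2:ℂ)*Eab
  have hCmb : (f PCm 0 - f PA 0)*(f PC 0 - f PA 0) + (f PCm 1 - f PA 1)*(f PC 1 - f PA 1)
      = (1:ℂ)*((f PB 0 - f PA 0)*(f PC 0 - f PA 0)+(f PB 1 - f PA 1)*(f PC 1 - f PA 1))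
        + (-1:ℂ)*((f PC 0 - f PA 0)^2+(f PC 1 - f PA 1)^2) := by
    linear_combination (1/2:ℂ)*E4 - (1/2:ℂ)*E6 + (3/2:ℂ)*EQb - (1/2:ℂ)*Eab
  obtain ⟨hCm0', hCm1'⟩ := tripod hdet hCma hCmb
  have hCm0 : f PCm 0 = f PA 0 + (1:ℂ)*(f PB 0 - f PA 0) + (-1:ℂ)*(f PC 0 - f PA 0) := by
    linear_combination hCm0'
  have hCm1 : f PCm 1 = f PA 1 + (1:ℂ)*(f PB 1 - f PA 1) + (-1:ℂ)*(f PC 1 - f PA 1) := by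
    linear_combination hCm1'
  -- step G
  have hGa : (f PG 0 - f PA 0)*(f PB 0 - f PA 0) + (f PG 1 - f PA 1)*(f PB 1 - f PA 1)
      = (1/3:ℂ)*((f PB 0 - f PA 0)^2+(f PB 1 - f PA 1)^2)
        + (1/3:ℂ)*((f PB 0 - f PA 0)*(f PC 0 - f PA 0)+(f PB 1 - f PA 1)*(f PC 1 - f PA 1)) := by
    linear_combination (1/2:ℂ)*E7 - (1/2:ℂ)*E8 + (1/6:ℂ)*EQa - (1/6:ℂ)*Eab
  have hGb : (f PG 0 - f PA 0)*(f PC 0 - f PA 0) + (f PG 1 - f PA 1)*(f PC 1 - f PA 1)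
      = (1/3:ℂ)*((f PB 0 - f PA 0)*(f PC 0 - f PA 0)+(f PB 1 - f PA 1)*(f PC 1 - f PA 1))
        + (1/3:ℂ)*((f PC 0 - f PA 0)^2+(f PC 1 - f PA 1)^2) := by
    linear_combination (1/2:ℂ)*E7 - (1/2:ℂ)*E9 + (1/6:ℂ)*EQb - (1/6:ℂ)*Eab
  obtain ⟨hG0', hG1'⟩ := tripod hdet hGa hGb
  have hG0 : f PG 0 = f PA 0 + (1/3:ℂ)*(f PB 0 - f PA 0) + (1/3:ℂ)*(f PC 0 - f PA 0) := by
    linear_combination hG0'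
  have hG1 : f PG 1 = f PA 1 + (1/3:ℂ)*(f PB 1 - f PA 1) + (1/3:ℂ)*(f PC 1 - f PA 1) := by
    linear_combination hG1'
  -- step X (= x)
  rw [hG0, hG1] at E12
  have hXa : (f x 0 - f PA 0)*(f PB 0 - f PA 0) + (f x 1 - f PA 1)*(f PB 1 - f PA 1)
      = (-1/3:ℂ)*((f PB 0 - f PA 0)^2+(f PB 1 - f PA 1)^2)
        + (2/3:ℂ)*((f PB 0 - f PA 0)*(f PC 0 - f PA 0)+(f PB 1 - f PA 1)*(f PC 1 - f PA 1)) := by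
    linear_combination (1/2:ℂ)*E10 + (1:ℂ)*E11 - (3/2:ℂ)*E12 + (1/2:ℂ)*EQa
      - (1/3:ℂ)*EQb - (1/6:ℂ)*Eab
  have hXb : (f x 0 - f PA 0)*(f PC 0 - f PA 0) + (f x 1 - f PA 1)*(f PC 1 - f PA 1)
      = (-1/3:ℂ)*((f PB 0 - f PA 0)*(f PC 0 - f PA 0)+(f PB 1 - f PA 1)*(f PC 1 - f PA 1))
        + (2/3:ℂ)*((f PC 0 - f PA 0)^2+(f PC 1 - f PA 1)^2) := by
    linear_combination (-1/2:ℂ)*E10 + (1/2:ℂ)*E11 - (1/6:ℂ)*EQb + (1/6:ℂ)*Eab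
  obtain ⟨hX0', hX1'⟩ := tripod hdet hXa hXb
  have hX0 : f x 0 = f PA 0 + (-1/3:ℂ)*(f PB 0 - f PA 0) + (2/3:ℂ)*(f PC 0 - f PA 0) := by
    linear_combination hX0'
  have hX1 : f x 1 = f PA 1 + (-1/3:ℂ)*(f PB 1 - f PA 1) + (2/3:ℂ)*(f PC 1 - f PA 1) := by
    linear_combination hX1'
  -- step Gm
  rw [hCm0, hCm1] at E13
  rw [hX0, hX1] at E15
  have hGma : (f PGm 0 - f PA 0)*(f PB 0 - f PA 0) + (f PGm 1 - f PA 1)*(f PB 1 - f PA 1)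
      = (2/3:ℂ)*((f PB 0 - f PA 0)^2+(f PB 1 - f PA 1)^2)
        + (-1/3:ℂ)*((f PB 0 - f PA 0)*(f PC 0 - f PA 0)+(f PB 1 - f PA 1)*(f PC 1 - f PA 1)) := by
    linear_combination (-1:ℂ)*E13 + (5/2:ℂ)*E14 - (3/2:ℂ)*E15 + (1/2:ℂ)*EQa
      + (5/3:ℂ)*EQb - (7/6:ℂ)*Eab
  have hGmb : (f PGm 0 - f PA 0)*(f PC 0 - f PA 0) + (f PGm 1 - f PA 1)*(f PC 1 - f PA 1)
      = (2/3:ℂ)*((f PB 0 - f PA 0)*(f PC 0 - f PA 0)+(f PB 1 - f PA 1)*(f PC 1 - f PA 1))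
        + (-1/3:ℂ)*((f PC 0 - f PA 0)^2+(f PC 1 - f PA 1)^2) := by
    linear_combination (-1/2:ℂ)*E13 + (2:ℂ)*E14 - (3/2:ℂ)*E15 + (2/3:ℂ)*EQa
      + (3/2:ℂ)*EQb - (7/6:ℂ)*Eab
  obtain ⟨hGm0', hGm1'⟩ := tripod hdet hGma hGmb
  have hGm0 : f PGm 0 = f PA 0 + (2/3:ℂ)*(f PB 0 - f PA 0) + (-1/3:ℂ)*(f PC 0 - f PA 0) := by
    linear_combination hGm0'
  have hGm1 : f PGm 1 = f PA 1 + (2/3:ℂ)*(f PB 1 - f PA 1) + (-1/3:ℂ)*(f PC 1 - f PA 1) := by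
    linear_combination hGm1'
  -- step Y (= y)
  rw [hGm0, hGm1] at E16
  rw [hG0, hG1] at E17
  have hYa : (f y 0 - f PA 0)*(f PB 0 - f PA 0) + (f y 1 - f PA 1)*(f PB 1 - f PA 1)
      = (1/3:ℂ)*((f PB 0 - f PA 0)^2+(f PB 1 - f PA 1)^2)
        + (0:ℂ)*((f PB 0 - f PA 0)*(f PC 0 - f PA 0)+(f PB 1 - f PA 1)*(f PC 1 - f PA 1)) := by
    linear_combination (-1/2:ℂ)*E16 - (1/2:ℂ)*E17 + (1:ℂ)*E18 - (1/18:ℂ)*EQa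
      + (1/9:ℂ)*EQb - (1/18:ℂ)*Eab
  have hYb : (f y 0 - f PA 0)*(f PC 0 - f PA 0) + (f y 1 - f PA 1)*(f PC 1 - f PA 1)
      = (1/3:ℂ)*((f PB 0 - f PA 0)*(f PC 0 - f PA 0)+(f PB 1 - f PA 1)*(f PC 1 - f PA 1))
        + (0:ℂ)*((f PC 0 - f PA 0)^2+(f PC 1 - f PA 1)^2) := by
    linear_combination (1/2:ℂ)*E16 - (1:ℂ)*E17 + (1/2:ℂ)*E18 - (1/9:ℂ)*EQa
      + (1/18:ℂ)*EQb + (1/18:ℂ)*Eab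
  obtain ⟨hY0', hY1'⟩ := tripod hdet hYa hYb
  have hY0 : f y 0 = f PA 0 + (1/3:ℂ)*(f PB 0 - f PA 0) + (0:ℂ)*(f PC 0 - f PA 0) := by
    linear_combination hY0'
  have hY1 : f y 1 = f PA 1 + (1/3:ℂ)*(f PB 1 - f PA 1) + (0:ℂ)*(f PC 1 - f PA 1) := by
    linear_combination hY1'
  -- conclusion
  rw [hX0, hX1, hY0, hY1]
  linear_combination (4/9:ℂ)*E3

lemma sq3 : (Real.sqrt 3)^2 = 3 := Real.sq_sqrt (by norm_num)
lemma sq113 : (Real.sqrt (11/3))^2 = 11/3 := Real.sq_sqrt (by norm_num)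
lemma sq2 : (Real.sqrt 2)^2 = 2 := Real.sq_sqrt (by norm_num)

lemma sqrt3_mem : Real.sqrt 3 ∈ Dratio := by
  refine kite one_mem_Dratio one_mem_Dratio one_mem_Dratio one_mem_Dratio
    (Real.sqrt_pos.mpr (by norm_num)) ?_ ?_ ?_ <;> rw [sq3] <;> norm_num

lemma sqrt113_mem : Real.sqrt (11/3) ∈ Dratio := by
  refine kite sqrt3_mem sqrt3_mem one_mem_Dratio one_mem_Dratio
    (Real.sqrt_pos.mpr (by norm_num)) ?_ ?_ ?_ <;>
    simp only [div_pow, mul_pow, sq3, sq113, sq2] <;> norm_num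

lemma sqrt33_mem : Real.sqrt 3 / 3 ∈ Dratio := by
  have he : (0:ℝ) < Real.sqrt 3 / 3 := by
    have := Real.sqrt_pos.mpr (show (0:ℝ) < 3 by norm_num); linarith
  refine kite sqrt113_mem one_mem_Dratio one_mem_Dratio one_mem_Dratio he ?_ ?_ ?_ <;>
    simp only [div_pow, mul_pow, sq3, sq113, sq2] <;> norm_num

lemma third_mem : (1/3:ℝ) ∈ Dratio := by
  have h := mul_mem_Dratio sqrt33_mem sqrt33_mem
  have : Real.sqrt 3 / 3 * (Real.sqrt 3 / 3) = 1/3 := by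
    rw [div_mul_div_comm, ← sq, sq3]; norm_num
  rwa [this] at h

lemma twothird_mem : (2/3:ℝ) ∈ Dratio :=
  frame one_mem_Dratio sqrt3_mem sqrt33_mem third_mem

lemma final_mem : 2 * Real.sqrt 2 / 3 ∈ Dratio := by
  have he : (0:ℝ) < 2 * Real.sqrt 2 / 3 := by
    have := Real.sqrt_pos.mpr (show (0:ℝ) < 2 by norm_num); linarith
  refine kite twothird_mem sqrt33_mem sqrt33_mem one_mem_Dratio he ?_ ?_ ?_ <;>
    simp only [div_pow, mul_pow, sq3, sq113, sq2] <;> norm_num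


end BQaux

theorem two_sqrt_two_div_three_mul_mem_D {d : ℝ} (hd : d ∈ D) :
    2 * Real.sqrt 2 / 3 * d ∈ D :=
  BQaux.final_mem.2 d hd
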